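/- The span of a well-graded family of finite sets is itself well-graded. -/

import Mathlib

open Finset

variable {α : Type*} [DecidableEq α]

/-- The span of a family `G`: all unions of nonempty subfamilies of `G`. -/
def Span (G : Finset (Finset α)) : Finset (Finset α) :=
  (G.powerset.filter Finset.Nonempty).image fun H => H.sup id

/-- A family is ∪-closed if it contains the union of each of its nonempty subfamilies. -/
def UnionClosed (F : Finset (Finset α)) : Prop :=
  ∀ H ⊆ F, H.Nonempty → H.sup id ∈ F

/-- `p` is a tight path from `P` to `Q` inside the family `F`. -/
def IsTightPath (F : Finset (Finset α)) (P Q : Finset α) (p : List (Finset α)) : Prop :=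
  p.head? = some P ∧ p.getLast? = some Q ∧
  p.length = (symmDiff P Q).card + 1 ∧
  (∀ S ∈ p, S ∈ F) ∧
  List.Chain' (fun A B => (symmDiff A B).card = 1) p

/-- A family is well-graded if any two distinct members are joined by a tight path. -/
def WellGraded (F : Finset (Finset α)) : Prop :=
  ∀ P ∈ F, ∀ Q ∈ F, P ≠ Q → ∃ p, IsTightPath F P Q p

/-- `B` is a base of `F`: a minimal subfamily of `F` spanning `F`. -/
def IsBase (B F : Finset (Finset α)) : Prop :=
  B ⊆ F ∧ Span B = F ∧ ∀ H ⊆ B, Span H = F → H = B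

/-- `A` is an atom of `F` at `x`: an inclusion-minimal member of `F` containing `x`. -/
def IsAtomAt (F : Finset (Finset α)) (x : α) (A : Finset α) : Prop :=
  A ∈ F ∧ x ∈ A ∧ ∀ B ∈ F, x ∈ B → B ⊆ A → B = A

/-- `A` is an atom of `F`: either the empty set (if it is in `F`) or an atom at some point. -/
def IsAtomOf (F : Finset (Finset α)) (A : Finset α) : Prop :=
  (A = ∅ ∧ A ∈ F) ∨ ∃ x, IsAtomAt F x A

/-- The surmise function: the collection of atoms of `F` at `x`. -/
def surmise (F : Finset (Finset α)) (x : α) : Finset (Finset α) :=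
  F.filter fun A => x ∈ A ∧ ∀ B ∈ F, x ∈ B → B ⊆ A → B = A

/-- `{σ(x) : x ∈ ∪F}` forms a partition of `B \ {∅}`. -/
def SurmisePartition (F B : Finset (Finset α)) : Prop :=
  (∀ x ∈ F.sup id, ∀ y ∈ F.sup id,
      surmise F x = surmise F y ∨ Disjoint (surmise F x) (surmise F y)) ∧
  (F.sup id).sup (surmise F) = B.erase ∅

/-- The endpoints of `X` in the family `B`: elements of `X` lying in no proper
subset of `X` belonging to `B`. -/
def endpoints (B : Finset (Finset α)) (X : Finset α) : Finset α :=
  X \ (B.filter fun Y => Y ⊂ X).sup id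

/-- A family is discriminative if points contained in the same members are equal. -/
def Discriminative (F : Finset (Finset α)) : Prop :=
  ∀ u ∈ F.sup id, ∀ v ∈ F.sup id, (∀ S ∈ F, (u ∈ S ↔ v ∈ S)) → u = v

section SpanWG

variable {G : Finset (Finset α)}

private lemma mem_Span_iff {P : Finset α} :
    P ∈ Span G ↔ ∃ H, H ⊆ G ∧ H.Nonempty ∧ H.sup id = P := by
  simp only [Span, Finset.mem_image, Finset.mem_filter, Finset.mem_powerset]
  constructor
  · rintro ⟨H, ⟨h1, h2⟩, h3⟩; exact ⟨H, h1, h2, h3⟩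
  · rintro ⟨H, h1, h2, h3⟩; exact ⟨H, ⟨h1, h2⟩, h3⟩

private lemma union_mem_Span {P C : Finset α} (hP : P ∈ Span G) (hC : C ∈ G) :
    P ∪ C ∈ Span G := by
  obtain ⟨H, hHG, hHne, hHsup⟩ := mem_Span_iff.mp hP
  refine mem_Span_iff.mpr ⟨insert C H, ?_, ⟨C, Finset.mem_insert_self _ _⟩, ?_⟩
  · exact Finset.insert_subset hC hHG
  · rw [Finset.sup_insert, hHsup]; exact sup_comm _ _

private lemma sd_card_triangle (A B C : Finset α) :
    (symmDiff A C).card ≤ (symmDiff A B).card + (symmDiff B C).card :=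
  le_trans (Finset.card_le_card (symmDiff_triangle A B C)) (Finset.card_union_le _ _)

private lemma sd_insert_of_mem {P Q : Finset α} {x : α} (hxP : x ∈ P) (hxQ : x ∉ Q) :
    symmDiff P (insert x Q) = (symmDiff P Q).erase x := by
  ext y
  simp only [Finset.mem_symmDiff, Finset.mem_erase, Finset.mem_insert]
  by_cases hy : y = x
  · subst hy; tauto
  · tauto

private lemma sd_insert_self {P : Finset α} {x : α} (hxP : x ∉ P) :
    symmDiff P (insert x P) = {x} := by
  ext y
  simp only [Finset.mem_symmDiff, Finset.mem_insert, Finset.mem_singleton]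
  by_cases hy : y = x
  · subst hy; tauto
  · tauto

private lemma chain_bound :
    ∀ (p : List (Finset α)) (X Y : Finset α), p.head? = some X → p.getLast? = some Y →
      List.Chain' (fun A B => (symmDiff A B).card = 1) p →
      (symmDiff X Y).card + 1 ≤ p.length := by
  intro p
  induction p with
  | nil => intro X Y h; simp at h
  | cons Z rest ih =>
    intro X Y h1 h2 h3
    have hZ : Z = X := by simpa using h1
    subst hZ
    cases rest with
    | nil =>
      have : Z = Y := by simpa using h2
      subst this
      simp
    | cons C rest' =>
      rw [List.getLast?_cons_cons] at h2
      rw [List.Chain', List.isChain_cons_cons] at h3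
      have hb := ih C Y rfl h2 h3.2
      have ht := sd_card_triangle Z C Y
      have h1' := h3.1
      simp only [List.length_cons] at *
      omega

private lemma key_step :
    ∀ (p : List (Finset α)) (P A B : Finset α), P ∈ Span G →
      p.head? = some A → p.getLast? = some B →
      (∀ S ∈ p, S ∈ G) →
      List.Chain' (fun X Y => (symmDiff X Y).card = 1) p →
      p.length = (symmDiff A B).card + 1 →
      A ⊆ P → ¬ B ⊆ P →
      ∃ x, x ∈ B ∧ x ∉ P ∧ insert x P ∈ Span G := by
  intro p
  induction p with
  | nil => intro P A B _ h; simp at h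
  | cons Z rest ih =>
    intro P A B hP h1 h2 hmem hch hlen hAP hBP
    have hZ : Z = A := by simpa using h1
    subst hZ
    cases rest with
    | nil =>
      have : Z = B := by simpa using h2
      subst this
      exact absurd hAP hBP
    | cons C rest' =>
      rw [List.getLast?_cons_cons] at h2
      rw [List.Chain', List.isChain_cons_cons] at hch
      have hbound := chain_bound (C :: rest') C B rfl h2 hch.2
      have hlen' : (C :: rest').length = (symmDiff Z B).card := by
        simpa using hlen
      have htri := sd_card_triangle Z C B
      have hAC := hch.1
      by_cases hCP : C ⊆ P
      · refine ih P C B hP rfl h2 (fun S hS => hmem S (List.mem_cons_of_mem _ hS))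
          hch.2 ?_ hCP hBP
        omega
      · obtain ⟨x, hxC, hxP⟩ := Finset.not_subset.mp hCP
        have hxA : x ∉ Z := fun h => hxP (hAP h)
        have hsdAC : symmDiff Z C = {x} := by
          obtain ⟨a, ha⟩ := Finset.card_eq_one.mp hAC
          have hx : x ∈ symmDiff Z C := Finset.mem_symmDiff.mpr (Or.inr ⟨hxC, hxA⟩)
          rw [ha] at hx ⊢
          rw [Finset.mem_singleton] at hx
          rw [hx]
        have hxB : x ∈ B := by
          by_contra hxB
          have hne : x ∉ symmDiff Z B := by
            simp only [Finset.mem_symmDiff]; tauto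
          have hx' : x ∈ symmDiff C B := Finset.mem_symmDiff.mpr (Or.inl ⟨hxC, hxB⟩)
          have hsub : symmDiff Z B ⊆ (symmDiff C B).erase x := by
            intro y hy
            have hy' := symmDiff_triangle Z C B hy
            rw [hsdAC] at hy'
            rcases Finset.mem_union.mp hy' with h | h
            · rw [Finset.mem_singleton] at h
              exact absurd hy (h ▸ hne)
            · exact Finset.mem_erase.mpr ⟨fun he => hne (he ▸ hy), h⟩
          have hc1 := Finset.card_le_card hsub
          have hc2 := Finset.card_erase_of_mem hx'
          have hc3 : 0 < (symmDiff C B).card := Finset.card_pos.mpr ⟨x, hx'⟩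
          omega
        refine ⟨x, hxB, hxP, ?_⟩
        have heq : insert x P = P ∪ C := by
          apply Finset.Subset.antisymm
          · exact Finset.insert_subset (Finset.mem_union_right _ hxC)
              Finset.subset_union_left
          · refine Finset.union_subset (Finset.subset_insert _ _) ?_
            intro y hy
            by_cases hyx : y = x
            · exact hyx ▸ Finset.mem_insert_self _ _
            · have hyA : y ∈ Z := by
                by_contra hyA
                have : y ∈ symmDiff Z C := Finset.mem_symmDiff.mpr (Or.inr ⟨hy, hyA⟩)
                rw [hsdAC, Finset.mem_singleton] at this
                exact hyx this
              exact Finset.mem_insert_of_mem (hAP hyA)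
        rw [heq]
        exact union_mem_Span hP (hmem C (by simp))

end SpanWG

/-- The span of a well-graded family is itself well-graded. -/
theorem span_wellGraded (G : Finset (Finset α)) (hG : WellGraded G) :
    WellGraded (Span G) := by
  suffices h : ∀ n (P Q : Finset α), P ∈ Span G → Q ∈ Span G →
      (symmDiff P Q).card = n → P ≠ Q → ∃ p, IsTightPath (Span G) P Q p by
    intro P hP Q hQ hne
    exact h _ P Q hP hQ rfl hne
  intro n
  induction n using Nat.strong_induction_on with
  | _ n ih =>
    intro P Q hP hQ hcard hne
    obtain ⟨H, hHG, hHne, hHsup⟩ := mem_Span_iff.mp hP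
    obtain ⟨K, hKG, hKne, hKsup⟩ := mem_Span_iff.mp hQ
    by_cases hQP : Q ⊆ P
    · -- Q ⊂ P : find a neighbor R = insert x Q of Q with x ∈ P \ Q
      have hPQ : ¬ P ⊆ Q := fun h => hne (Finset.Subset.antisymm h hQP)
      obtain ⟨q, hqP, hqQ⟩ := Finset.not_subset.mp hPQ
      obtain ⟨A, hAK⟩ := hKne
      have hAG : A ∈ G := hKG hAK
      have hAQ : A ⊆ Q := hKsup ▸ Finset.le_sup (f := id) hAK
      obtain ⟨B, hBH, hqB⟩ : ∃ B ∈ H, q ∈ B := by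
        rw [← hHsup] at hqP
        simpa using Finset.mem_sup.mp hqP
      have hBG : B ∈ G := hHG hBH
      have hBP : B ⊆ P := hHsup ▸ Finset.le_sup (f := id) hBH
      have hBQ : ¬ B ⊆ Q := fun h => hqQ (h hqB)
      have hAB : A ≠ B := fun h => hBQ (h ▸ hAQ)
      obtain ⟨p0, hp1, hp2, hp3, hp4, hp5⟩ := hG A hAG B hBG hAB
      obtain ⟨x, hxB, hxQ, hR⟩ := key_step p0 Q A B hQ hp1 hp2 hp4 hp5 hp3 hAQ hBQ
      have hxP : x ∈ P := hBP hxB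
      set R := insert x Q with hRdef
      have hsdRQ : symmDiff R Q = {x} := by
        rw [symmDiff_comm]; exact sd_insert_self hxQ
      have hsdPR : symmDiff P R = (symmDiff P Q).erase x := sd_insert_of_mem hxP hxQ
      have hxPQ : x ∈ symmDiff P Q := Finset.mem_symmDiff.mpr (Or.inl ⟨hxP, hxQ⟩)
      have hn : 0 < n := by
        rw [← hcard]; exact Finset.card_pos.mpr ⟨x, hxPQ⟩
      by_cases hPR : P = R
      · refine ⟨[P, Q], rfl, rfl, ?_, ?_, ?_⟩
        · have : (symmDiff P Q).card = 1 := by rw [hPR, hsdRQ]; simp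
          simp [this]
        · intro S hS
          simp only [List.mem_cons, List.mem_singleton, List.not_mem_nil, or_false] at hS
          rcases hS with h | h
          · exact h ▸ hP
          · exact h ▸ hQ
        · refine List.isChain_cons_cons.mpr ⟨?_, List.isChain_singleton _⟩
          rw [hPR, hsdRQ]; simp
      · have hcard' : (symmDiff P R).card = n - 1 := by
          rw [hsdPR, Finset.card_erase_of_mem hxPQ, hcard]
        obtain ⟨p', hq1, hq2, hq3, hq4, hq5⟩ :=
          ih (n - 1) (by omega) P R hP hR hcard' hPR
        refine ⟨p' ++ [Q], ?_, ?_, ?_, ?_, ?_⟩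
        · cases p' with
          | nil => simp at hq1
          | cons a l => simpa using hq1
        · exact List.getLast?_concat (l := p')
        · have : p'.length = n - 1 + 1 := by rw [hq3, hcard']
          simp only [List.length_append, List.length_singleton, this, hcard]
          omega
        · intro S hS
          rcases List.mem_append.mp hS with h | h
          · exact hq4 S h
          · simp at h; exact h ▸ hQ
        · refine List.isChain_append.mpr ⟨hq5, List.isChain_singleton _, ?_⟩
          intro a ha b hb
          simp only [List.head?_cons, Option.mem_def, Option.some.injEq] at hb
          have ha' : a = R := by
            rw [hq2] at ha
            exact (Option.some_injective _ ha.symm)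
          subst ha'; subst hb
          rw [hsdRQ]; simp
    · -- ¬ Q ⊆ P : find a neighbor R = insert x P of P with x ∈ Q \ P
      obtain ⟨q, hqQ, hqP⟩ := Finset.not_subset.mp hQP
      obtain ⟨A, hAH⟩ := hHne
      have hAG : A ∈ G := hHG hAH
      have hAP : A ⊆ P := hHsup ▸ Finset.le_sup (f := id) hAH
      obtain ⟨B, hBK, hqB⟩ : ∃ B ∈ K, q ∈ B := by
        rw [← hKsup] at hqQ
        simpa using Finset.mem_sup.mp hqQ
      have hBG : B ∈ G := hKG hBK
      have hBQ : B ⊆ Q := hKsup ▸ Finset.le_sup (f := id) hBK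
      have hBP : ¬ B ⊆ P := fun h => hqP (h hqB)
      have hAB : A ≠ B := fun h => hBP (h ▸ hAP)
      obtain ⟨p0, hp1, hp2, hp3, hp4, hp5⟩ := hG A hAG B hBG hAB
      obtain ⟨x, hxB, hxP, hR⟩ := key_step p0 P A B hP hp1 hp2 hp4 hp5 hp3 hAP hBP
      have hxQ : x ∈ Q := hBQ hxB
      set R := insert x P with hRdef
      have hsdPR : symmDiff P R = {x} := sd_insert_self hxP
      have hsdRQ : symmDiff R Q = (symmDiff P Q).erase x := by
        rw [symmDiff_comm, sd_insert_of_mem hxQ hxP, symmDiff_comm]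
      have hxPQ : x ∈ symmDiff P Q := Finset.mem_symmDiff.mpr (Or.inr ⟨hxQ, hxP⟩)
      have hn : 0 < n := by
        rw [← hcard]; exact Finset.card_pos.mpr ⟨x, hxPQ⟩
      by_cases hRQ : R = Q
      · refine ⟨[P, Q], rfl, rfl, ?_, ?_, ?_⟩
        · have : (symmDiff P Q).card = 1 := by rw [← hRQ, hsdPR]; simp
          simp [this]
        · intro S hS
          simp only [List.mem_cons, List.mem_singleton, List.not_mem_nil, or_false] at hS
          rcases hS with h | h
          · exact h ▸ hP
          · exact h ▸ hQ
        · refine List.isChain_cons_cons.mpr ⟨?_, List.isChain_singleton _⟩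
          rw [← hRQ, hsdPR]; simp
      · have hcard' : (symmDiff R Q).card = n - 1 := by
          rw [hsdRQ, Finset.card_erase_of_mem hxPQ, hcard]
        obtain ⟨p', hq1, hq2, hq3, hq4, hq5⟩ :=
          ih (n - 1) (by omega) R Q hR hQ hcard' hRQ
        refine ⟨P :: p', rfl, ?_, ?_, ?_, ?_⟩
        · cases p' with
          | nil => simp at hq1
          | cons a l => rw [List.getLast?_cons_cons]; exact hq2
        · have : p'.length = n - 1 + 1 := by rw [hq3, hcard']
          simp only [List.length_cons, this, hcard]
          omega
        · intro S hS
          rcases List.mem_cons.mp hS with h | h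
          · exact h ▸ hP
          · exact hq4 S h
        · refine List.isChain_cons.mpr ⟨?_, hq5⟩
          intro y hy
          rw [hq1] at hy
          simp only [Option.mem_def, Option.some.injEq] at hy
          subst hy
          rw [hsdPR]; simp
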